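/- The full-support baker's map C_d of 𝔠ⁿ (moving the first letter of the first coordinate to the front of the d-th coordinate, for 2 ≤ d ≤ n) can be written as a product of finitely many transposition homeomorphisms ⟨α β⟩; specifically, C_d = ⟨01₁,10₁⟩ · ⟨00₁, γ.0_d⟩⟨01₁, γ.1_d⟩⟨0₁,γ⟩ · ⟨0₁.01_d, 0₁.10_d⟩ · ⟨γ.0₁, 0₁.1_d.0_d⟩⟨γ.1₁, 0₁.1_d.1_d⟩⟨γ, 0₁.1_d⟩ · (analogous factors with 1₁ in place of 0₁) · ⟨0₁.01_d,0₁.10_d⟩⟨1₁.01_d,1₁.10_d⟩ — in particular, C_d lies in the group generated by the transpositions. -/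
import Mathlib


open scoped Classical

/-- Finite words over the alphabet `{0,1}`. -/
abbrev Word := List Bool
/-- Cantor space: infinite `{0,1}`-sequences. -/
abbrev Cantor := ℕ → Bool

/-- Concatenate a finite word with an infinite sequence. -/
def catW (α : Word) (w : Cantor) : Cantor :=
  fun i => if h : i < α.length then α.get ⟨i, h⟩ else w (i - α.length)

/-- The basic open set of sequences having `α` as a prefix. -/
def GammaW (α : Word) : Set Cantor := Set.range (catW α)

/-- Incomparability of words: neither is a prefix of the other. -/
def IncompW (α β : Word) : Prop := ¬ α <+: β ∧ ¬ β <+: α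

/-- Addresses: `n`-tuples of finite words. -/
abbrev Addr (n : ℕ) := Fin n → Word
/-- `n`-dimensional Cantor space. -/
abbrev CantorN (n : ℕ) := Fin n → Cantor

/-- The basic open set in `𝔠ⁿ` indexed by the address `α`. -/
def GammaN {n : ℕ} (α : Addr n) : Set (CantorN n) :=
  { w | ∀ d, w d ∈ GammaW (α d) }

/-- Incomparability of addresses: some coordinate pair is incomparable. -/
def IncompA {n : ℕ} (α β : Addr n) : Prop := ∃ d, IncompW (α d) (β d)

/-- Drop the first `k` symbols of an infinite sequence. -/
def dropSeq (k : ℕ) (w : Cantor) : Cantor := fun i => w (i + k)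

/-- Prepend the address `α` coordinatewise. -/
def catA {n : ℕ} (α : Addr n) (u : CantorN n) : CantorN n :=
  fun d => catW (α d) (u d)

/-- Remove the prefix `α` coordinatewise. -/
def dropA {n : ℕ} (α : Addr n) (w : CantorN n) : CantorN n :=
  fun d => dropSeq ((α d).length) (w d)

/-- The transposition `⟨α β⟩` of `𝔠ⁿ`: exchanges `Γ(α)` and `Γ(β)` by prefix
substitution and fixes all other points. -/
noncomputable def swapN {n : ℕ} (α β : Addr n) : CantorN n → CantorN n :=
  fun w =>
    if w ∈ GammaN α then catA β (dropA α w)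
    else if w ∈ GammaN β then catA α (dropA β w)
    else w

/-- Append the symbol `x` to the `d`-th coordinate of the address `α`. -/
def appA {n : ℕ} (α : Addr n) (d : Fin n) (x : Bool) : Addr n :=
  Function.update α d (α d ++ [x])

/-- Append the word `u` to the `d`-th coordinate of the address `α`. -/
def appW {n : ℕ} (α : Addr n) (d : Fin n) (u : Word) : Addr n :=
  Function.update α d (α d ++ u)

/-- Coordinatewise concatenation of addresses. -/
def concatA {n : ℕ} (α η : Addr n) : Addr n := fun d => α d ++ η d

/-- The address with word `u` in coordinate `d` and empty words elsewhere. -/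
def unitA {n : ℕ} (d : Fin n) (u : Word) : Addr n :=
  fun e => if e = d then u else []

/-- Prepend a letter to an infinite sequence. -/
def consSeq (b : Bool) (w : Cantor) : Cantor :=
  fun i => match i with
  | 0 => b
  | i + 1 => w i

/-- The full-support baker's map: moves the first letter of coordinate `1`
to the front of coordinate `d`. -/
def bakerFull {n : ℕ} [NeZero n] (d : Fin n) : CantorN n → CantorN n :=
  fun w e =>
    if e = 0 then dropSeq 1 (w 0)
    else if e = d then consSeq (w 0 0) (w d)
    else w e

/-- The inverse of the full-support baker's map: moves the first letter of
coordinate `d` to the front of coordinate `1`. -/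
def invBakerFull {n : ℕ} [NeZero n] (d : Fin n) : CantorN n → CantorN n :=
  fun w e =>
    if e = 0 then consSeq (w d 0) (w 0)
    else if e = d then dropSeq 1 (w d)
    else w e

/-- The index-`d` baker's map with support `Γ(α)`: sends `α.x₁.u ↦ α.x_d.u`
and fixes all points outside `Γ(α)`. -/
noncomputable def bakerN {n : ℕ} [NeZero n] (d : Fin n) (α : Addr n) :
    CantorN n → CantorN n :=
  fun w => if w ∈ GammaN α then catA α (bakerFull d (dropA α w)) else w

/-- The inverse of the index-`d` baker's map with support `Γ(α)`. -/
noncomputable def invBakerN {n : ℕ} [NeZero n] (d : Fin n) (α : Addr n) :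
    CantorN n → CantorN n :=
  fun w => if w ∈ GammaN α then catA α (invBakerFull d (dropA α w)) else w

/-- The partial prefix-substitution action of the symbol `⟨γ δ⟩` on addresses,
as a relation: `ActRel γ δ ζ ζ'` holds iff `ζ • ⟨γ δ⟩` is defined and
equals `ζ'`. -/
def ActRel {n : ℕ} (γ δ ζ ζ' : Addr n) : Prop :=
  (∃ η, ζ = concatA γ η ∧ ζ' = concatA δ η) ∨
  (∃ η, ζ = concatA δ η ∧ ζ' = concatA γ η) ∨
  (IncompA ζ γ ∧ IncompA ζ δ ∧ ζ' = ζ)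



section Aux

lemma dropSeq_zero (w : Cantor) : dropSeq 0 w = w := rfl

lemma dropSeq_one_consSeq (b : Bool) (w : Cantor) : dropSeq 1 (consSeq b w) = w := rfl

lemma dropSeq_two_consSeq (b : Bool) (w : Cantor) :
    dropSeq 2 (consSeq b w) = dropSeq 1 w := rfl

@[simp] lemma consSeq_zero (b : Bool) (w : Cantor) : consSeq b w 0 = b := rfl

lemma consSeq_head_tail (w : Cantor) : consSeq (w 0) (dropSeq 1 w) = w := by
  funext i; rcases i with _ | i <;> rfl

lemma catW_nil (w : Cantor) : catW [] w = w := by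
  funext i; simp [catW]

lemma catW_cons (b : Bool) (u : Word) (w : Cantor) :
    catW (b :: u) w = consSeq b (catW u w) := by
  funext i
  rcases i with _ | i
  · simp [catW, consSeq]
  · simp only [catW, consSeq, List.length_cons]
    by_cases h : i < u.length
    · rw [dif_pos (Nat.succ_lt_succ h), dif_pos h]
      rfl
    · rw [dif_neg (fun hc => h (Nat.lt_of_succ_lt_succ hc)), dif_neg h,
        Nat.succ_sub_succ]

lemma mem_GammaW_nil (w : Cantor) : w ∈ GammaW ([] : Word) := ⟨w, catW_nil w⟩

lemma mem_GammaW_cons {b : Bool} {u : Word} {w : Cantor} :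
    w ∈ GammaW (b :: u) ↔ w 0 = b ∧ dropSeq 1 w ∈ GammaW u := by
  constructor
  · rintro ⟨v, rfl⟩
    rw [catW_cons]
    exact ⟨rfl, ⟨v, (dropSeq_one_consSeq b (catW u v)).symm⟩⟩
  · rintro ⟨h0, v, hv⟩
    refine ⟨v, ?_⟩
    rw [catW_cons, hv, ← h0]
    exact consSeq_head_tail w

lemma expand_s (w : Cantor) :
    w = consSeq (w 0) (consSeq (w 1) (consSeq (w 2) (dropSeq 3 w))) := by
  funext i; rcases i with _ | _ | _ | i <;> rfl

lemma expand_t (w : Cantor) :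
    w = consSeq (w 0) (consSeq (w 1) (dropSeq 2 w)) := by
  funext i; rcases i with _ | _ | i <;> rfl

/-- Two-coordinate membership predicate. -/
def mem2 (a : Word × Word) (p : Cantor × Cantor) : Prop :=
  p.1 ∈ GammaW a.1 ∧ p.2 ∈ GammaW a.2

/-- Two-coordinate prefix substitution. -/
def sub2 (a b : Word × Word) (p : Cantor × Cantor) : Cantor × Cantor :=
  (catW b.1 (dropSeq a.1.length p.1), catW b.2 (dropSeq a.2.length p.2))

/-- Two-coordinate transposition. -/
noncomputable def swap2 (a b : Word × Word) (p : Cantor × Cantor) : Cantor × Cantor :=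
  if mem2 a p then sub2 a b p else if mem2 b p then sub2 b a p else p

/-- Two-coordinate baker's map. -/
def baker2 (p : Cantor × Cantor) : Cantor × Cantor :=
  (dropSeq 1 p.1, consSeq (p.1 0) p.2)

/-- Lift a two-coordinate map to `CantorN n`, acting in coordinates `0` and `d`. -/
def lift2 {n : ℕ} [NeZero n] (d : Fin n) (f : Cantor × Cantor → Cantor × Cantor)
    (w : CantorN n) : CantorN n :=
  fun e => if e = 0 then (f (w 0, w d)).1 else if e = d then (f (w 0, w d)).2 else w e

lemma lift2_apply0 {n : ℕ} [NeZero n] (d : Fin n) (f : Cantor × Cantor → Cantor × Cantor)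
    (w : CantorN n) : lift2 d f w 0 = (f (w 0, w d)).1 := if_pos rfl

lemma lift2_applyd {n : ℕ} [NeZero n] {d : Fin n} (hd : d ≠ 0)
    (f : Cantor × Cantor → Cantor × Cantor) (w : CantorN n) :
    lift2 d f w d = (f (w 0, w d)).2 := by
  simp [lift2, hd]

lemma lift2_apply_other {n : ℕ} [NeZero n] {d e : Fin n}
    (f : Cantor × Cantor → Cantor × Cantor) (w : CantorN n)
    (he0 : e ≠ 0) (hed : e ≠ d) : lift2 d f w e = w e := by
  simp [lift2, he0, hed]

/-- Address supported in coordinates `0` and `d`. -/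
def adr {n : ℕ} [NeZero n] (d : Fin n) (u v : Word) : Addr n :=
  fun e => if e = 0 then u else if e = d then v else []

lemma adr_zero {n : ℕ} [NeZero n] (d : Fin n) (u v : Word) : adr d u v 0 = u := by
  simp [adr]

lemma adr_d {n : ℕ} [NeZero n] {d : Fin n} (hd : d ≠ 0) (u v : Word) :
    adr d u v d = v := by
  simp [adr, hd]

lemma adr_other {n : ℕ} [NeZero n] {d : Fin n} {e : Fin n} (u v : Word)
    (he0 : e ≠ 0) (hed : e ≠ d) : adr d u v e = [] := by
  simp [adr, he0, hed]

lemma incomp_fst {n : ℕ} [NeZero n] (d : Fin n) {u v u' v' : Word}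
    (h : IncompW u u') : IncompA (adr d u v) (adr d u' v') :=
  ⟨0, by rwa [adr_zero, adr_zero]⟩

lemma incomp_snd {n : ℕ} [NeZero n] {d : Fin n} (hd : d ≠ 0) {u v u' v' : Word}
    (h : IncompW v v') : IncompA (adr d u v) (adr d u' v') :=
  ⟨d, by rwa [adr_d hd, adr_d hd]⟩

lemma mem_GammaN_adr {n : ℕ} [NeZero n] {d : Fin n} (hd : d ≠ 0) (u v : Word)
    (w : CantorN n) :
    w ∈ GammaN (adr d u v) ↔ mem2 (u, v) (w 0, w d) := by
  constructor
  · intro h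
    refine ⟨?_, ?_⟩
    · have := h 0; rwa [adr_zero] at this
    · have := h d; rwa [adr_d hd] at this
  · rintro ⟨h1, h2⟩ e
    by_cases he0 : e = 0
    · subst he0; rwa [adr_zero]
    · by_cases hed : e = d
      · subst hed; rwa [adr_d hd]
      · rw [adr_other u v he0 hed]; exact mem_GammaW_nil _

lemma swapN_adr {n : ℕ} [NeZero n] {d : Fin n} (hd : d ≠ 0) (u v u' v' : Word) :
    swapN (adr d u v) (adr d u' v') = lift2 d (swap2 (u, v) (u', v')) := by
  funext w e
  have hsub : ∀ (a b : Word) (a' b' : Word),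
      catA (adr d a' b') (dropA (adr d a b) w) e
        = (if e = 0 then (sub2 (a, b) (a', b') (w 0, w d)).1
           else if e = d then (sub2 (a, b) (a', b') (w 0, w d)).2
           else w e) := by
    intro a b a' b'
    by_cases he0 : e = 0
    · subst he0
      simp [catA, dropA, sub2, adr_zero]
    · by_cases hed : e = d
      · subst hed
        simp [catA, dropA, sub2, adr_d hd, he0]
      · simp [catA, dropA, he0, hed, adr_other, catW_nil, dropSeq_zero]
  simp only [swapN, lift2, swap2, mem_GammaN_adr hd]
  by_cases h1 : mem2 (u, v) (w 0, w d)
  · simp only [if_pos h1, hsub]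
  · by_cases h2 : mem2 (u', v') (w 0, w d)
    · simp only [if_neg h1, if_pos h2, hsub]
    · simp only [if_neg h1, if_neg h2]
      by_cases he0 : e = 0
      · subst he0; rfl
      · by_cases hed : e = d
        · subst hed; simp [he0]
        · simp [he0, hed]

lemma lift2_comp {n : ℕ} [NeZero n] {d : Fin n} (hd : d ≠ 0)
    (f g : Cantor × Cantor → Cantor × Cantor) :
    lift2 d f ∘ lift2 d g = lift2 d (f ∘ g) := by
  funext w e
  by_cases he0 : e = 0
  · subst he0
    rw [Function.comp_apply, lift2_apply0, lift2_apply0, lift2_apply0,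
      lift2_applyd hd, Prod.mk.eta, Function.comp_apply]
  · by_cases hed : e = d
    · subst hed
      rw [Function.comp_apply, lift2_applyd hd, lift2_applyd hd, lift2_apply0,
        lift2_applyd hd, Prod.mk.eta, Function.comp_apply]
    · rw [Function.comp_apply, lift2_apply_other _ _ he0 hed,
        lift2_apply_other _ _ he0 hed, lift2_apply_other _ _ he0 hed]

lemma lift2_baker {n : ℕ} [NeZero n] (d : Fin n) :
    bakerFull (n := n) d = lift2 d baker2 := by
  funext w e
  simp only [bakerFull, lift2, baker2]

end Aux

set_option maxHeartbeats 12000000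

lemma key2 :
    (swap2 ([true], [false, true]) ([true], [true, false]) ∘
    swap2 ([false], [false, true]) ([false], [true, false]) ∘
    swap2 ([false], [false]) ([true], [true]) ∘
    swap2 ([false, true], [false]) ([true], [true, true]) ∘
    swap2 ([false, false], [false]) ([true], [true, false]) ∘
    swap2 ([true], [false, true]) ([true], [true, false]) ∘
    swap2 ([true], []) ([false], [false]) ∘
    swap2 ([true, true], []) ([false], [false, true]) ∘
    swap2 ([true, false], []) ([false], [false, false]) ∘
    swap2 ([true], [false]) ([false], [true]) ∘
    swap2 ([true, true], [false]) ([false], [true, true]) ∘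
    swap2 ([true, false], [false]) ([false], [true, false]) ∘
    swap2 ([false], [false, true]) ([false], [true, false]) ∘
    swap2 ([false], []) ([true], [false]) ∘
    swap2 ([false, true], []) ([true], [false, true]) ∘
    swap2 ([false, false], []) ([true], [false, false]) ∘
    swap2 ([false, true], []) ([true, false], []) ∘
    swap2 ([false, true], [true]) ([true, false], [true]) ∘
    swap2 ([], [true]) ([], [false, true]) ∘
    swap2 ([], [false, true]) ([false], [true]) ∘
    swap2 ([], [false, true]) ([true], [true]) ∘
    swap2 ([], [false, false]) ([true], [true]) ∘
    swap2 ([], [false]) ([], [true]) ∘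
    swap2 ([], [true]) ([true], [false]) ∘
    swap2 ([], [true]) ([], [false, false]) ∘
    swap2 ([false], [false, true]) ([true], [true]))
    = baker2 := by
  funext p
  obtain ⟨s, t⟩ := p
  obtain ⟨a0, a1, a2, s, rfl⟩ : ∃ a0 a1 a2 s', s = consSeq a0 (consSeq a1 (consSeq a2 s')) :=
    ⟨_, _, _, _, expand_s s⟩
  obtain ⟨c0, c1, t, rfl⟩ : ∃ c0 c1 t', t = consSeq c0 (consSeq c1 t') :=
    ⟨_, _, _, expand_t t⟩
  cases a0 <;> cases a1 <;> cases a2 <;> cases c0 <;> cases c1 <;>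
    simp [swap2, mem2, sub2, baker2, Function.comp, mem_GammaW_cons, mem_GammaW_nil,
      catW_cons, catW_nil, dropSeq_one_consSeq, dropSeq_two_consSeq, dropSeq_zero]

/-- The full-support baker's map C_d can be written as a composite of finitely
many transpositions ⟨α β⟩ (with incomparable entries); in particular it lies
in the group generated by the transpositions. -/
theorem stmt19 (n : ℕ) [NeZero n] (hn : 2 ≤ n) (d : Fin n) (hd : d ≠ 0) :
    ∃ L : List (Addr n × Addr n),
      (∀ p ∈ L, IncompA p.1 p.2) ∧
      bakerFull d = (L.map (fun p => swapN p.1 p.2)).foldr (· ∘ ·) id := by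
  classical
  refine ⟨[(adr d [true] [false, true], adr d [true] [true, false]),
      (adr d [false] [false, true], adr d [false] [true, false]),
      (adr d [false] [false], adr d [true] [true]),
      (adr d [false, true] [false], adr d [true] [true, true]),
      (adr d [false, false] [false], adr d [true] [true, false]),
      (adr d [true] [false, true], adr d [true] [true, false]),
      (adr d [true] [], adr d [false] [false]),
      (adr d [true, true] [], adr d [false] [false, true]),
      (adr d [true, false] [], adr d [false] [false, false]),
      (adr d [true] [false], adr d [false] [true]),
      (adr d [true, true] [false], adr d [false] [true, true]),
      (adr d [true, false] [false], adr d [false] [true, false]),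
      (adr d [false] [false, true], adr d [false] [true, false]),
      (adr d [false] [], adr d [true] [false]),
      (adr d [false, true] [], adr d [true] [false, true]),
      (adr d [false, false] [], adr d [true] [false, false]),
      (adr d [false, true] [], adr d [true, false] []),
      (adr d [false, true] [true], adr d [true, false] [true]),
      (adr d [] [true], adr d [] [false, true]),
      (adr d [] [false, true], adr d [false] [true]),
      (adr d [] [false, true], adr d [true] [true]),
      (adr d [] [false, false], adr d [true] [true]),
      (adr d [] [false], adr d [] [true]),
      (adr d [] [true], adr d [true] [false]),
      (adr d [] [true], adr d [] [false, false]),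
      (adr d [false] [false, true], adr d [true] [true])], ?_, ?_⟩
  · intro p hp
    simp only [List.mem_cons, List.not_mem_nil, or_false] at hp
    rcases hp with rfl|rfl|rfl|rfl|rfl|rfl|rfl|rfl|rfl|rfl|rfl|rfl|rfl|rfl|rfl|rfl|rfl|rfl|rfl|rfl|rfl|rfl|rfl|rfl|rfl|rfl
    all_goals first
      | exact incomp_fst d ⟨by decide, by decide⟩
      | exact incomp_snd hd ⟨by decide, by decide⟩
  · simp only [List.map_cons, List.map_nil, List.foldr_cons, List.foldr_nil,
      swapN_adr hd, Function.comp_id, lift2_comp hd]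
    rw [lift2_baker d]
    exact congrArg (lift2 d) key2.symm
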